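/- arXiv:1108.6113 — 4 statements merged into one kernel-verified Lean document; each statement's English description precedes it below -/
import Mathlib

section
/- Let n ≥ 4 be even. There exist two directed graphs G₁ and G₂ on n vertices with identical in-degree sequences and identical out-degree sequences (namely n/2 + 1 vertices of degree 1 and n/2 − 1 vertices of degree 2, for both in- and out-degrees), all edges labeled +1, such that R_new(G₁) = 0 while R_new(G₂) > 0. Hence the redundancy measure R_new is not determined by the degree sequence. -/
inductive Reach {V : Type*} (E : Finset (V × V)) (w : V × V → ℤ) : V → V → ℤ → Prop
  | refl (u : V) : Reach E w u u 1
  | step {u v t : V} {x : ℤ} : Reach E w u v x → (v, t) ∈ E → Reach E w u t (x * w (v, t))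

def BTRValid {V : Type*} (E : Finset (V × V)) (w : V × V → ℤ) (E' : Finset (V × V)) : Prop :=
  E' ⊆ E ∧ ∀ a b : V, ∀ x : ℤ, Reach E' w a b x ↔ Reach E w a b x

def inDeg {n : ℕ} (E : Finset (Fin n × Fin n)) (v : Fin n) : ℕ :=
  (E.filter (fun e => e.2 = v)).card

def outDeg {n : ℕ} (E : Finset (Fin n × Fin n)) (v : Fin n) : ℕ :=
  (E.filter (fun e => e.1 = v)).card

/-- A directed graph on `Fin n` whose degree sequence consists of `n/2 + 1` vertices of
degree `1` and `n/2 - 1` vertices of degree `2`, both for in-degrees and out-degrees. -/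
def DegSeqOK (n : ℕ) (E : Finset (Fin n × Fin n)) : Prop :=
  ((Finset.univ.filter (fun v => inDeg E v = 1)).card = n / 2 + 1) ∧
  ((Finset.univ.filter (fun v => inDeg E v = 2)).card = n / 2 - 1) ∧
  ((Finset.univ.filter (fun v => outDeg E v = 1)).card = n / 2 + 1) ∧
  ((Finset.univ.filter (fun v => outDeg E v = 2)).card = n / 2 - 1)

section Aux

variable {V : Type*}

theorem reach_mono {E E' : Finset (V × V)} {w : V × V → ℤ} (hs : E' ⊆ E) {a b : V} {x : ℤ}
    (h : Reach E' w a b x) : Reach E w a b x := by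
  induction h with
  | refl => exact .refl _
  | step h he ih => exact .step ih (hs he)

theorem reach_one {E : Finset (V × V)} {a b : V} {x : ℤ}
    (h : Reach E (fun _ => (1 : ℤ)) a b x) : x = 1 := by
  induction h with
  | refl => rfl
  | step h he ih => simp [ih]

theorem reach_trans {E : Finset (V × V)} {w : V × V → ℤ} {a b c : V} {x y : ℤ}
    (h1 : Reach E w a b x) (h2 : Reach E w b c y) : Reach E w a c (x * y) := by
  induction h2 with
  | refl => simpa using h1
  | step h he ih =>
    rw [← mul_assoc]
    exact .step ih he

theorem reach_last {E : Finset (V × V)} {w : V × V → ℤ} {a b : V} {x : ℤ}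
    (h : Reach E w a b x) :
    (a = b ∧ x = 1) ∨ ∃ c y, Reach E w a c y ∧ (c, b) ∈ E ∧ x = y * w (c, b) := by
  cases h with
  | refl => exact .inl ⟨rfl, rfl⟩
  | step h he => exact .inr ⟨_, _, h, he, rfl⟩

theorem reach_first {E : Finset (V × V)} {w : V × V → ℤ} {a b : V} {x : ℤ}
    (h : Reach E w a b x) :
    a = b ∨ ∃ c y, (a, c) ∈ E ∧ Reach E w c b y := by
  induction h with
  | refl => exact .inl rfl
  | step h he ih =>
    rcases ih with rfl | ⟨c, y, hac, hcb⟩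
    · exact .inr ⟨_, _, he, .refl _⟩
    · exact .inr ⟨c, _, hac, .step hcb he⟩

theorem reach_closed {E : Finset (V × V)} {w : V × V → ℤ} {S : V → Prop}
    (hS : ∀ a b : V, S a → (a, b) ∈ E → S b) {a b : V} {x : ℤ}
    (h : Reach E w a b x) (ha : S a) : S b := by
  induction h with
  | refl => exact ha
  | step h he ih => exact hS _ _ ih he

end Aux

/-- Edge predicate for the irredundant graph `G₁`: a cycle `0 → 1 → ⋯ → m → 0`
with pendant 2-cycles attached at vertices `1, …, m-1` (pendant of `i` is `m+i`). -/
def P1 (m a b : ℕ) : Prop :=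
  ((a < m ∧ b = a + 1) ∨ (a = m ∧ b = 0)) ∨
    ((1 ≤ a ∧ a < m ∧ b = m + a) ∨ (m < a ∧ b + m = a))

instance (m a b : ℕ) : Decidable (P1 m a b) := by unfold P1; infer_instance

/-- Edge predicate for the big cycle `0 → 1 → ⋯ → 2m-1 → 0`. -/
def PC (m a b : ℕ) : Prop :=
  (a + 1 < 2 * m ∧ b = a + 1) ∨ (a + 1 = 2 * m ∧ b = 0)

instance (m a b : ℕ) : Decidable (PC m a b) := by unfold PC; infer_instance

/-- Edge predicate for the redundant graph `G₂`: the big cycle plus shortcuts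
`a → a+2` for even `a ≤ 2m-4`. -/
def P2 (m a b : ℕ) : Prop :=
  PC m a b ∨ (a % 2 = 0 ∧ a + 4 ≤ 2 * m ∧ b = a + 2)

instance (m a b : ℕ) : Decidable (P2 m a b) := by unfold P2; infer_instance

def E1 (n m : ℕ) : Finset (Fin n × Fin n) :=
  Finset.univ.filter (fun e => P1 m e.1.val e.2.val)

def E2 (n m : ℕ) : Finset (Fin n × Fin n) :=
  Finset.univ.filter (fun e => P2 m e.1.val e.2.val)

def EC (n m : ℕ) : Finset (Fin n × Fin n) :=
  Finset.univ.filter (fun e => PC m e.1.val e.2.val)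

theorem inDeg_filter {n : ℕ} (P : ℕ → ℕ → Prop) [∀ a b, Decidable (P a b)] (v : Fin n) :
    inDeg (Finset.univ.filter (fun e : Fin n × Fin n => P e.1.val e.2.val)) v
      = (Finset.univ.filter (fun a : Fin n => P a.val v.val)).card := by
  unfold inDeg
  rw [Finset.filter_filter]
  refine Finset.card_bij' (fun e _ => e.1) (fun a _ => (a, v)) ?_ ?_ ?_ ?_
  · intro e he
    simp only [Finset.mem_filter, Finset.mem_univ, true_and] at he ⊢
    rw [← he.2]; exact he.1
  · intro a ha
    simp only [Finset.mem_filter, Finset.mem_univ, true_and] at ha ⊢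
    exact ⟨ha, trivial⟩
  · intro e he
    simp only [Finset.mem_filter, Finset.mem_univ, true_and] at he
    exact Prod.ext rfl he.2.symm
  · intro a ha; rfl

theorem outDeg_filter {n : ℕ} (P : ℕ → ℕ → Prop) [∀ a b, Decidable (P a b)] (v : Fin n) :
    outDeg (Finset.univ.filter (fun e : Fin n × Fin n => P e.1.val e.2.val)) v
      = (Finset.univ.filter (fun b : Fin n => P v.val b.val)).card := by
  unfold outDeg
  rw [Finset.filter_filter]
  refine Finset.card_bij' (fun e _ => e.2) (fun b _ => (v, b)) ?_ ?_ ?_ ?_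
  · intro e he
    simp only [Finset.mem_filter, Finset.mem_univ, true_and] at he ⊢
    rw [← he.2]; exact he.1
  · intro b hb
    simp only [Finset.mem_filter, Finset.mem_univ, true_and] at hb ⊢
    exact ⟨hb, trivial⟩
  · intro e he
    simp only [Finset.mem_filter, Finset.mem_univ, true_and] at he
    exact Prod.ext he.2.symm rfl
  · intro b hb; rfl

theorem count_val {n : ℕ} (Q : ℕ → Prop) [DecidablePred Q] :
    (Finset.univ.filter (fun v : Fin n => Q v.val)).card = ((Finset.range n).filter Q).card := by
  refine Finset.card_bij' (fun v _ => v.val) (fun a ha => ⟨a, ?_⟩) ?_ ?_ ?_ ?_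
  · simp only [Finset.mem_filter, Finset.mem_range] at ha; exact ha.1
  · intro v hv
    simp only [Finset.mem_filter, Finset.mem_univ, true_and] at hv
    simp only [Finset.mem_filter, Finset.mem_range]
    exact ⟨v.isLt, hv⟩
  · intro a ha
    simp only [Finset.mem_filter, Finset.mem_univ, true_and] at ha ⊢
    exact ha.2
  · intro v hv; rfl
  · intro a ha; rfl

theorem count_deg_eq {n : ℕ} (d : Fin n → ℕ) (Q : ℕ → Prop) [DecidablePred Q]
    (h : ∀ v : Fin n, d v = if Q v.val then 2 else 1) :
    (Finset.univ.filter (fun v => d v = 2)).card = ((Finset.range n).filter Q).card ∧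
    (Finset.univ.filter (fun v => d v = 1)).card = n - ((Finset.range n).filter Q).card := by
  have e2 : (Finset.univ.filter (fun v => d v = 2))
      = Finset.univ.filter (fun v : Fin n => Q v.val) := by
    apply Finset.filter_congr
    intro v _
    rw [h v]
    split_ifs with hq <;> simp [hq]
  have e1 : (Finset.univ.filter (fun v => d v = 1))
      = Finset.univ.filter (fun v : Fin n => ¬ Q v.val) := by
    apply Finset.filter_congr
    intro v _
    rw [h v]
    split_ifs with hq <;> simp [hq]
  refine ⟨by rw [e2, count_val], ?_⟩
  rw [e1, count_val (Q := fun x => ¬ Q x), Finset.filter_not,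
    Finset.card_sdiff_of_subset (Finset.filter_subset _ _), Finset.card_range]

theorem inDeg_E1 (m : ℕ) (hm : 2 ≤ m) (v : Fin (2 * m)) :
    inDeg (E1 (2 * m) m) v = if 1 ≤ v.val ∧ v.val < m then 2 else 1 := by
  unfold E1
  rw [inDeg_filter]
  have hv := v.isLt
  split_ifs with h
  · rw [Finset.card_eq_two]
    refine ⟨⟨v.val - 1, by omega⟩, ⟨m + v.val, by omega⟩, by simp only [ne_eq, Fin.ext_iff]; omega, ?_⟩
    ext x
    have hx := x.isLt
    simp only [Finset.mem_filter, Finset.mem_univ, true_and, Finset.mem_insert,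
      Finset.mem_singleton, Fin.ext_iff]
    simp only [P1]
    omega
  · rw [Finset.card_eq_one]
    by_cases h0 : v.val = 0
    · refine ⟨⟨m, by omega⟩, ?_⟩
      ext x
      have hx := x.isLt
      simp only [Finset.mem_filter, Finset.mem_univ, true_and, Finset.mem_singleton,
        Fin.ext_iff]
      simp only [P1]
      omega
    · by_cases hmm : v.val = m
      · refine ⟨⟨m - 1, by omega⟩, ?_⟩
        ext x
        have hx := x.isLt
        simp only [Finset.mem_filter, Finset.mem_univ, true_and, Finset.mem_singleton,
          Fin.ext_iff]
        simp only [P1]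
        omega
      · refine ⟨⟨v.val - m, by omega⟩, ?_⟩
        ext x
        have hx := x.isLt
        simp only [Finset.mem_filter, Finset.mem_univ, true_and, Finset.mem_singleton,
          Fin.ext_iff]
        simp only [P1]
        omega

theorem outDeg_E1 (m : ℕ) (hm : 2 ≤ m) (v : Fin (2 * m)) :
    outDeg (E1 (2 * m) m) v = if 1 ≤ v.val ∧ v.val < m then 2 else 1 := by
  unfold E1
  rw [outDeg_filter]
  have hv := v.isLt
  split_ifs with h
  · rw [Finset.card_eq_two]
    refine ⟨⟨v.val + 1, by omega⟩, ⟨m + v.val, by omega⟩, by simp only [ne_eq, Fin.ext_iff]; omega, ?_⟩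
    ext x
    have hx := x.isLt
    simp only [Finset.mem_filter, Finset.mem_univ, true_and, Finset.mem_insert,
      Finset.mem_singleton, Fin.ext_iff]
    simp only [P1]
    omega
  · rw [Finset.card_eq_one]
    by_cases h0 : v.val = 0
    · refine ⟨⟨1, by omega⟩, ?_⟩
      ext x
      have hx := x.isLt
      simp only [Finset.mem_filter, Finset.mem_univ, true_and, Finset.mem_singleton,
        Fin.ext_iff]
      simp only [P1]
      omega
    · by_cases hmm : v.val = m
      · refine ⟨⟨0, by omega⟩, ?_⟩
        ext x
        have hx := x.isLt
        simp only [Finset.mem_filter, Finset.mem_univ, true_and, Finset.mem_singleton,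
          Fin.ext_iff]
        simp only [P1]
        omega
      · refine ⟨⟨v.val - m, by omega⟩, ?_⟩
        ext x
        have hx := x.isLt
        simp only [Finset.mem_filter, Finset.mem_univ, true_and, Finset.mem_singleton,
          Fin.ext_iff]
        simp only [P1]
        omega

theorem inDeg_E2 (m : ℕ) (hm : 2 ≤ m) (v : Fin (2 * m)) :
    inDeg (E2 (2 * m) m) v = if v.val % 2 = 0 ∧ 2 ≤ v.val ∧ v.val + 2 ≤ 2 * m then 2 else 1 := by
  unfold E2
  rw [inDeg_filter]
  have hv := v.isLt
  split_ifs with h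
  · rw [Finset.card_eq_two]
    refine ⟨⟨v.val - 1, by omega⟩, ⟨v.val - 2, by omega⟩, by simp only [ne_eq, Fin.ext_iff]; omega, ?_⟩
    ext x
    have hx := x.isLt
    simp only [Finset.mem_filter, Finset.mem_univ, true_and, Finset.mem_insert,
      Finset.mem_singleton, Fin.ext_iff]
    simp only [P2, PC]
    omega
  · rw [Finset.card_eq_one]
    by_cases h0 : v.val = 0
    · refine ⟨⟨2 * m - 1, by omega⟩, ?_⟩
      ext x
      have hx := x.isLt
      simp only [Finset.mem_filter, Finset.mem_univ, true_and, Finset.mem_singleton,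
        Fin.ext_iff]
      simp only [P2, PC]
      omega
    · refine ⟨⟨v.val - 1, by omega⟩, ?_⟩
      ext x
      have hx := x.isLt
      simp only [Finset.mem_filter, Finset.mem_univ, true_and, Finset.mem_singleton,
        Fin.ext_iff]
      simp only [P2, PC]
      omega

theorem outDeg_E2 (m : ℕ) (hm : 2 ≤ m) (v : Fin (2 * m)) :
    outDeg (E2 (2 * m) m) v = if v.val % 2 = 0 ∧ v.val + 4 ≤ 2 * m then 2 else 1 := by
  unfold E2
  rw [outDeg_filter]
  have hv := v.isLt
  split_ifs with h
  · rw [Finset.card_eq_two]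
    refine ⟨⟨v.val + 1, by omega⟩, ⟨v.val + 2, by omega⟩, by simp only [ne_eq, Fin.ext_iff]; omega, ?_⟩
    ext x
    have hx := x.isLt
    simp only [Finset.mem_filter, Finset.mem_univ, true_and, Finset.mem_insert,
      Finset.mem_singleton, Fin.ext_iff]
    simp only [P2, PC]
    omega
  · rw [Finset.card_eq_one]
    by_cases h0 : v.val + 1 = 2 * m
    · refine ⟨⟨0, by omega⟩, ?_⟩
      ext x
      have hx := x.isLt
      simp only [Finset.mem_filter, Finset.mem_univ, true_and, Finset.mem_singleton,
        Fin.ext_iff]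
      simp only [P2, PC]
      omega
    · refine ⟨⟨v.val + 1, by omega⟩, ?_⟩
      ext x
      have hx := x.isLt
      simp only [Finset.mem_filter, Finset.mem_univ, true_and, Finset.mem_singleton,
        Fin.ext_iff]
      simp only [P2, PC]
      omega

theorem countQ1 (m : ℕ) (hm : 2 ≤ m) :
    ((Finset.range (2 * m)).filter (fun v => 1 ≤ v ∧ v < m)).card = m - 1 := by
  have : (Finset.range (2 * m)).filter (fun v => 1 ≤ v ∧ v < m) = Finset.Ico 1 m := by
    ext x
    simp only [Finset.mem_filter, Finset.mem_range, Finset.mem_Ico]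
    omega
  rw [this, Nat.card_Ico]

theorem countQ2in (m : ℕ) (hm : 2 ≤ m) :
    ((Finset.range (2 * m)).filter (fun v => v % 2 = 0 ∧ 2 ≤ v ∧ v + 2 ≤ 2 * m)).card
      = m - 1 := by
  rw [show m - 1 = (Finset.range (m - 1)).card from (Finset.card_range _).symm]
  refine Finset.card_bij' (fun v _ => v / 2 - 1) (fun j _ => 2 * j + 2) ?_ ?_ ?_ ?_ <;>
    (intro a ha; simp only [Finset.mem_filter, Finset.mem_range] at ha ⊢) <;> omega

theorem countQ2out (m : ℕ) (hm : 2 ≤ m) :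
    ((Finset.range (2 * m)).filter (fun v => v % 2 = 0 ∧ v + 4 ≤ 2 * m)).card = m - 1 := by
  rw [show m - 1 = (Finset.range (m - 1)).card from (Finset.card_range _).symm]
  refine Finset.card_bij' (fun v _ => v / 2) (fun j _ => 2 * j) ?_ ?_ ?_ ?_ <;>
    (intro a ha; simp only [Finset.mem_filter, Finset.mem_range] at ha ⊢) <;> omega

theorem cyc_reach (m : ℕ) (hm : 2 ≤ m) (a b : Fin (2 * m)) :
    Reach (EC (2 * m) m) (fun _ => (1 : ℤ)) a b 1 := by
  have L1 : ∀ (j : ℕ) (hj : j < 2 * m) (c : Fin (2 * m)), c.val ≤ j →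
      Reach (EC (2 * m) m) (fun _ => (1 : ℤ)) c ⟨j, hj⟩ 1 := by
    intro j
    induction j with
    | zero =>
      intro hj c hc
      have hce : c = ⟨0, hj⟩ := Fin.ext (show c.val = 0 by omega)
      rw [hce]; exact Reach.refl _
    | succ j ih =>
      intro hj c hc
      by_cases h : c.val = j + 1
      · have hce : c = ⟨j + 1, hj⟩ := Fin.ext h
        rw [hce]; exact Reach.refl _
      · have hj' : j < 2 * m := by omega
        have h1 := ih hj' c (by omega)
        have he : ((⟨j, hj'⟩ : Fin (2 * m)), (⟨j + 1, hj⟩ : Fin (2 * m))) ∈ EC (2 * m) m := by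
          simp only [EC, Finset.mem_filter, Finset.mem_univ, true_and]
          show PC m j (j + 1)
          unfold PC
          omega
        simpa using Reach.step h1 he
  have h0 : Reach (EC (2 * m) m) (fun _ => (1 : ℤ)) a ⟨0, by omega⟩ 1 := by
    have h1 := L1 (2 * m - 1) (by omega) a (by have := a.isLt; omega)
    have he : ((⟨2 * m - 1, by omega⟩ : Fin (2 * m)), (⟨0, by omega⟩ : Fin (2 * m)))
        ∈ EC (2 * m) m := by
      simp only [EC, Finset.mem_filter, Finset.mem_univ, true_and]
      show PC m (2 * m - 1) 0
      unfold PC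
      omega
    simpa using Reach.step h1 he
  have h2 := L1 b.val b.isLt ⟨0, by omega⟩ (Nat.zero_le _)
  have h3 : (⟨b.val, b.isLt⟩ : Fin (2 * m)) = b := Fin.ext rfl
  rw [h3] at h2
  simpa using reach_trans h0 h2

/-- For every even `n ≥ 4` there are two digraphs on `n` vertices (all edges labeled `+1`)
with identical in- and out-degree sequences (namely `n/2+1` vertices of degree 1 and
`n/2-1` vertices of degree 2) such that `R_new(G₁) = 0` (no proper valid BTR solution)
while `R_new(G₂) > 0` (some strictly smaller valid BTR solution exists). Hence `R_new`
is not determined by the degree sequence. -/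
theorem stmt_5 (n : ℕ) (hn : 4 ≤ n) (heven : Even n) :
    ∃ E₁ E₂ : Finset (Fin n × Fin n),
      DegSeqOK n E₁ ∧ DegSeqOK n E₂ ∧
      (∀ E' : Finset (Fin n × Fin n),
        BTRValid E₁ (fun _ => (1 : ℤ)) E' → E' = E₁) ∧
      (∃ E' : Finset (Fin n × Fin n),
        BTRValid E₂ (fun _ => (1 : ℤ)) E' ∧ E'.card < E₂.card) := by
  have h2 : n % 2 = 0 := Nat.even_iff.mp heven
  obtain ⟨m, rfl⟩ : ∃ m, n = 2 * m := ⟨n / 2, by omega⟩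
  have hm : 2 ≤ m := by omega
  refine ⟨E1 (2 * m) m, E2 (2 * m) m, ?_, ?_, ?_, ?_⟩
  · -- DegSeqOK for E1
    obtain ⟨hi2, hi1⟩ := count_deg_eq (inDeg (E1 (2 * m) m)) (fun v => 1 ≤ v ∧ v < m)
      (inDeg_E1 m hm)
    obtain ⟨ho2, ho1⟩ := count_deg_eq (outDeg (E1 (2 * m) m)) (fun v => 1 ≤ v ∧ v < m)
      (outDeg_E1 m hm)
    rw [countQ1 m hm] at hi2 hi1 ho2 ho1
    exact ⟨by omega, by omega, by omega, by omega⟩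
  · -- DegSeqOK for E2
    obtain ⟨hi2, hi1⟩ := count_deg_eq (inDeg (E2 (2 * m) m))
      (fun v => v % 2 = 0 ∧ 2 ≤ v ∧ v + 2 ≤ 2 * m) (inDeg_E2 m hm)
    obtain ⟨ho2, ho1⟩ := count_deg_eq (outDeg (E2 (2 * m) m))
      (fun v => v % 2 = 0 ∧ v + 4 ≤ 2 * m) (outDeg_E2 m hm)
    rw [countQ2in m hm] at hi2 hi1
    rw [countQ2out m hm] at ho2 ho1
    exact ⟨by omega, by omega, by omega, by omega⟩
  · -- E1 is irredundant
    rintro E' ⟨hsub, hiff⟩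
    refine Finset.Subset.antisymm hsub ?_
    rintro ⟨u, t⟩ he
    have hP : P1 m u.val t.val := by
      simpa [E1] using he
    have hR1 : Reach (E1 (2 * m) m) (fun _ => (1 : ℤ)) u t 1 := by
      simpa using Reach.step (Reach.refl u) he
    have hR' : Reach E' (fun _ => (1 : ℤ)) u t 1 := (hiff u t 1).mpr hR1
    have hut := t.isLt
    have huu := u.isLt
    unfold P1 at hP
    rcases hP with (⟨h1, h2⟩ | ⟨h1, h2⟩) | (⟨h1, h2, h3⟩ | ⟨h1, h2⟩)
    · -- cycle edge (u, u+1), u < m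
      by_contra hne
      have hres : t.val = u.val ∨ (1 ≤ u.val ∧ t.val = m + u.val) := by
        refine reach_closed
          (S := fun b : Fin (2 * m) => b.val = u.val ∨ (1 ≤ u.val ∧ b.val = m + u.val))
          ?_ hR' (Or.inl rfl)
        intro c d hSc hcd
        have hPcd : P1 m c.val d.val := by simpa [E1] using hsub hcd
        unfold P1 at hPcd
        have hdv := d.isLt
        have hcv := c.isLt
        by_cases hdt : d.val = t.val ∧ c.val = u.val
        · have e1 : c = u := Fin.ext hdt.2
          have e2 : d = t := Fin.ext hdt.1
          rw [e1, e2] at hcd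
          exact absurd hcd hne
        · rcases hSc with hcu | ⟨hu1, hcm⟩ <;> omega
      omega
    · -- cycle edge (m, 0)
      by_contra hne
      have hres : t.val = u.val := by
        refine reach_closed (S := fun b : Fin (2 * m) => b.val = u.val) ?_ hR' rfl
        intro c d hSc hcd
        have hPcd : P1 m c.val d.val := by simpa [E1] using hsub hcd
        unfold P1 at hPcd
        have hdv := d.isLt
        have hcv := c.isLt
        by_cases hdt : d.val = t.val ∧ c.val = u.val
        · have e1 : c = u := Fin.ext hdt.2
          have e2 : d = t := Fin.ext hdt.1
          rw [e1, e2] at hcd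
          exact absurd hcd hne
        · omega
      omega
    · -- pendant-out edge (u, m+u)
      rcases reach_last hR' with ⟨hequ, _⟩ | ⟨c, y, _, hct, _⟩
      · exact absurd (congrArg Fin.val hequ) (by omega)
      · have hPc : P1 m c.val t.val := by simpa [E1] using hsub hct
        unfold P1 at hPc
        have hcv := c.isLt
        have hcu : c = u := Fin.ext (by omega)
        rwa [hcu] at hct
    · -- pendant-back edge (m+t', t')
      rcases reach_first hR' with hequ | ⟨c, y, huc, _⟩
      · exact absurd (congrArg Fin.val hequ) (by omega)
      · have hPc : P1 m u.val c.val := by simpa [E1] using hsub huc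
        unfold P1 at hPc
        have hcv := c.isLt
        have hct : c = t := Fin.ext (by omega)
        rwa [hct] at huc
  · -- E2 has a redundant part: the bare cycle works
    have hsub : EC (2 * m) m ⊆ E2 (2 * m) m := by
      intro e he
      simp only [EC, Finset.mem_filter, Finset.mem_univ, true_and] at he
      simp only [E2, Finset.mem_filter, Finset.mem_univ, true_and, P2]
      exact Finset.mem_filter.mpr ⟨Finset.mem_univ _, Or.inl he⟩
    refine ⟨EC (2 * m) m, ⟨hsub, ?_⟩, ?_⟩
    · intro a b x
      constructor
      · exact reach_mono hsub
      · intro h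
        have hx : x = 1 := reach_one h
        subst hx
        exact cyc_reach m hm a b
    · apply Finset.card_lt_card
      rw [Finset.ssubset_iff_of_subset hsub]
      refine ⟨((⟨0, by omega⟩ : Fin (2 * m)), (⟨2, by omega⟩ : Fin (2 * m))), ?_, ?_⟩
      · simp only [E2, Finset.mem_filter, Finset.mem_univ, true_and]
        show P2 m 0 2
        unfold P2 PC
        omega
      · simp only [EC, Finset.mem_filter, Finset.mem_univ, true_and]
        show ¬ PC m 0 2
        unfold PC
        omega
end

section
/- Let G = (V, E, w) be a finite labeled directed graph with w : E → {−1, +1}. There exists a vertex labeling L : V → {−1, +1} making every edge consistent (i.e., w(u,v) = L(u)·L(v) for all edges (u,v)) if and only if every closed undirected chain in G has parity +1, where a closed undirected chain is a cycle in the underlying undirected graph (ignoring edge directions) and its parity is the product of the labels of its edges. -/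
/-- Undirected chains with parity: walks in the underlying undirected graph (edges may be
traversed in either direction), whose parity is the product of the labels of the edges
used; the empty chain has parity `1`. -/
inductive UChain {V : Type*} (E : Finset (V × V)) (w : V × V → ℤ) : V → V → ℤ → Prop
  | refl (u : V) : UChain E w u u 1
  | fwd {u v t : V} {x : ℤ} : UChain E w u v x → (v, t) ∈ E → UChain E w u t (x * w (v, t))
  | bwd {u v t : V} {x : ℤ} : UChain E w u v x → (t, v) ∈ E → UChain E w u t (x * w (t, v))

namespace UChain

variable {V : Type*} {E : Finset (V × V)} {w : V × V → ℤ}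

lemma pm (hw : ∀ e ∈ E, w e = -1 ∨ w e = 1) {u v : V} {x : ℤ}
    (h : UChain E w u v x) : x = -1 ∨ x = 1 := by
  induction h with
  | refl => right; rfl
  | fwd _ he ih => rcases ih with h | h <;> rcases hw _ he with h' | h' <;> simp [h, h']
  | bwd _ he ih => rcases ih with h | h <;> rcases hw _ he with h' | h' <;> simp [h, h']

lemma append {u v t : V} {x y : ℤ} (h1 : UChain E w u v x)
    (h2 : UChain E w v t y) : UChain E w u t (x * y) := by
  induction h2 with
  | refl => simpa using h1
  | fwd _ he ih => rw [← mul_assoc]; exact (ih).fwd he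
  | bwd _ he ih => rw [← mul_assoc]; exact (ih).bwd he

lemma reverse {u v : V} {x : ℤ} (h : UChain E w u v x) : UChain E w v u x := by
  induction h with
  | refl => exact .refl _
  | @fwd v t x _ he ih =>
      have h1 : UChain E w t v (1 * w (v, t)) := (UChain.refl t).bwd he
      have := h1.append ih
      simpa [mul_comm] using this
  | @bwd v t x _ he ih =>
      have h1 : UChain E w t v (1 * w (t, v)) := (UChain.refl t).fwd he
      have := h1.append ih
      simpa [mul_comm] using this

lemma unique (hw : ∀ e ∈ E, w e = -1 ∨ w e = 1)
    (hc : ∀ u : V, ∀ x : ℤ, UChain E w u u x → x = 1)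
    {u v : V} {x y : ℤ} (h1 : UChain E w u v x) (h2 : UChain E w u v y) : x = y := by
  have hclosed := hc u _ (h1.append h2.reverse)
  have hy : y * y = 1 := by rcases h2.pm hw with h | h <;> simp [h]
  calc x = (x * y) * y := by rw [mul_assoc, hy, mul_one]
    _ = y := by rw [hclosed, one_mul]

end UChain

/-- There exists a vertex labeling `L : V → {-1,+1}` making every edge consistent
(`w(u,v) = L u * L v`) iff every closed undirected chain has parity `+1`. -/
theorem stmt_8 {V : Type*} [Fintype V] (E : Finset (V × V)) (w : V × V → ℤ)
    (hw : ∀ e ∈ E, w e = -1 ∨ w e = 1) :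
    (∃ L : V → ℤ, (∀ v, L v = -1 ∨ L v = 1) ∧
        ∀ e ∈ E, w e = L e.1 * L e.2) ↔
      (∀ u : V, ∀ x : ℤ, UChain E w u u x → x = 1) := by
  constructor
  · rintro ⟨L, hL, hLe⟩ u x h
    have key : ∀ a b : V, ∀ y : ℤ, UChain E w a b y → y = L a * L b := by
      intro a b y h
      induction h with
      | refl => rcases hL a with h | h <;> simp [h]
      | @fwd v t x _ he ih =>
          rw [ih, hLe _ he, mul_assoc, ← mul_assoc (L v)]
          rcases hL v with h | h <;> simp [h]
      | @bwd v t x _ he ih =>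
          rw [ih, hLe _ he]
          rcases hL v with h | h <;> ring_nf <;> simp [h]
    have := key u u x h
    rcases hL u with h' | h' <;> simp [h'] at this <;> simp [this]
  · intro hc
    classical
    set s : Setoid V := ⟨fun a b => ∃ x, UChain E w a b x,
      ⟨fun a => ⟨1, .refl a⟩, fun ⟨x, h⟩ => ⟨x, h.reverse⟩,
        fun ⟨x, h1⟩ ⟨y, h2⟩ => ⟨x * y, h1.append h2⟩⟩⟩ with hs
    have hrep : ∀ v : V, ∃ x, UChain E w (@Quotient.mk _ s v).out v x := by
      intro v
      have := @Quotient.mk_out V s v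
      exact this
    refine ⟨fun v => (hrep v).choose, fun v => ((hrep v).choose_spec).pm hw, ?_⟩
    rintro ⟨a, b⟩ he
    have hab : (@Quotient.mk _ s a) = (@Quotient.mk _ s b) :=
      Quotient.sound ⟨1 * w (a, b), (UChain.refl a).fwd he⟩
    set c := (hrep a).choose with hcdef
    have h1 : UChain E w (@Quotient.mk _ s a).out b (c * w (a, b)) :=
      ((hrep a).choose_spec).fwd he
    rw [hab] at h1
    have h2 := UChain.unique hw hc h1 (hrep b).choose_spec
    have ha : c * c = 1 := by
      rcases ((hrep a).choose_spec).pm hw with h | h <;> rw [hcdef] <;> simp [h]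
    show w (a, b) = c * (hrep b).choose
    calc w (a, b) = (c * c) * w (a, b) := by rw [ha, one_mul]
      _ = c * (c * w (a, b)) := by ring
      _ = c * (hrep b).choose := by rw [h2]
end

section
/- There exists a finite labeled directed graph G with no negative directed cycles (every directed cycle has parity +1) and no incoherent feed-forward loops (for every pair of directed paths with the same endpoints, if one is a single edge and the other has length two, they have equal parity), yet G contains a closed undirected chain of parity −1 (hence the associated dynamical system is not monotone with respect to any orthant order). -/
def E4 : Finset (Fin 4 × Fin 4) := {(0, 1), (0, 2), (1, 3), (2, 3)}

def w4 : Fin 4 × Fin 4 → ℤ := fun p => if p = (2, 3) then -1 else 1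

lemma E4_incr : ∀ p ∈ E4, p.1 < p.2 := by decide

lemma reach_mono_s10 : ∀ {a b : Fin 4} {y : ℤ}, Reach E4 w4 a b y → a < b ∨ (a = b ∧ y = 1) := by
  intro a b y h
  induction h with
  | refl => exact Or.inr ⟨rfl, rfl⟩
  | step _ mem ih =>
    have hvt := E4_incr _ mem
    rcases ih with h | ⟨rfl, _⟩
    · exact Or.inl (h.trans hvt)
    · exact Or.inl hvt

/-- There is a finite labeled digraph with no negative directed cycles and no incoherent
feed-forward loops which nevertheless has a closed undirected chain of parity `-1`
(hence the associated system is not monotone with respect to any orthant order). -/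
theorem stmt_10 :
    ∃ (n : ℕ) (E : Finset (Fin n × Fin n)) (w : Fin n × Fin n → ℤ),
      (∀ e ∈ E, w e = -1 ∨ w e = 1) ∧
      (∀ u : Fin n, ∀ x : ℤ, Reach E w u u x → x = 1) ∧
      (∀ u v z : Fin n, (u, v) ∈ E → (u, z) ∈ E → (z, v) ∈ E →
        w (u, v) = w (u, z) * w (z, v)) ∧
      (∃ u : Fin n, UChain E w u u (-1)) := by
  refine ⟨4, E4, w4, ?_, ?_, ?_, ?_⟩
  · decide
  · intro u x h
    rcases reach_mono_s10 h with h | ⟨_, hx⟩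
    · exact absurd h (lt_irrefl u)
    · exact hx
  · intro u v z huv huz hzv
    have h1 : ∀ p ∈ E4, p.1 < p.2 := E4_incr
    have := h1 _ huv; have := h1 _ huz; have := h1 _ hzv
    -- no such triple exists
    revert huv huz hzv
    fin_cases u <;> fin_cases v <;> fin_cases z <;> decide
  · refine ⟨0, ?_⟩
    have m01 : ((0 : Fin 4), (1 : Fin 4)) ∈ E4 := by decide
    have m02 : ((0 : Fin 4), (2 : Fin 4)) ∈ E4 := by decide
    have m13 : ((1 : Fin 4), (3 : Fin 4)) ∈ E4 := by decide
    have m23 : ((2 : Fin 4), (3 : Fin 4)) ∈ E4 := by decide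
    have h : UChain E4 w4 0 0 (1 * w4 (0, 1) * w4 (1, 3) * w4 (2, 3) * w4 (0, 2)) :=
      .bwd (.bwd (.fwd (.fwd (.refl 0) m01) m13) m23) m02
    have hval : (1 * w4 (0, 1) * w4 (1, 3) * w4 (2, 3) * w4 (0, 2)) = -1 := by decide
    rwa [hval] at h
end

section
/- In any strongly connected component of a finite labeled directed graph, if for some pair of vertices u, v both a path of parity +1 and a path of parity −1 from u to v exist within the component, then for EVERY pair of vertices a, b in the component, paths from a to b of both parities exist within the component. Consequently every strongly connected component is either single-parity (each ordered vertex pair connected by paths of exactly one parity) or multiple-parity (each ordered vertex pair connected by paths of both parities). -/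
lemma Reach.trans {V : Type*} {E : Finset (V × V)} {w : V × V → ℤ} {u v t : V} {x y : ℤ}
    (h1 : Reach E w u v x) (h2 : Reach E w v t y) : Reach E w u t (x * y) := by
  induction h2 with
  | refl => simpa using h1
  | step h he ih => rw [← mul_assoc]; exact (ih).step he

lemma Reach.pm {V : Type*} {E : Finset (V × V)} {w : V × V → ℤ} {u v : V} {x : ℤ}
    (hw : ∀ e ∈ E, w e = -1 ∨ w e = 1) (h : Reach E w u v x) : x = -1 ∨ x = 1 := by
  induction h with
  | refl => exact Or.inr rfl
  | step h he ih =>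
    rcases ih with h' | h' <;> rcases hw _ he with h'' | h'' <;> simp [h', h'']

/-- In a strongly connected component `V₁` (paths within the component, i.e. using only
edges of `(V₁ × V₁) ∩ E`): if some ordered pair of vertices is connected by paths of both
parities, then every ordered pair of vertices of the component is connected by paths of
both parities.  Consequently every SCC is either single-parity (every ordered pair is
connected by paths of exactly one parity) or multiple-parity (every ordered pair is
connected by paths of both parities). -/
theorem stmt_12 {V : Type*} [DecidableEq V] (E : Finset (V × V)) (w : V × V → ℤ)
    (hw : ∀ e ∈ E, w e = -1 ∨ w e = 1)
    (V₁ : Finset V)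
    (E₁ : Finset (V × V)) (hE₁ : E₁ = E.filter (fun e => e.1 ∈ V₁ ∧ e.2 ∈ V₁))
    (hconn : ∀ a ∈ V₁, ∀ b ∈ V₁, ∃ x : ℤ, Reach E₁ w a b x) :
    ((∃ u ∈ V₁, ∃ v ∈ V₁, Reach E₁ w u v 1 ∧ Reach E₁ w u v (-1)) →
      ∀ a ∈ V₁, ∀ b ∈ V₁, Reach E₁ w a b 1 ∧ Reach E₁ w a b (-1)) ∧
    ((∀ a ∈ V₁, ∀ b ∈ V₁,
        (Reach E₁ w a b 1 ∧ ¬ Reach E₁ w a b (-1)) ∨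
        (Reach E₁ w a b (-1) ∧ ¬ Reach E₁ w a b 1)) ∨
      (∀ a ∈ V₁, ∀ b ∈ V₁, Reach E₁ w a b 1 ∧ Reach E₁ w a b (-1))) := by
  have hw₁ : ∀ e ∈ E₁, w e = -1 ∨ w e = 1 := by
    intro e he
    rw [hE₁, Finset.mem_filter] at he
    exact hw e he.1
  have main : (∃ u ∈ V₁, ∃ v ∈ V₁, Reach E₁ w u v 1 ∧ Reach E₁ w u v (-1)) →
      ∀ a ∈ V₁, ∀ b ∈ V₁, Reach E₁ w a b 1 ∧ Reach E₁ w a b (-1) := by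
    rintro ⟨u, hu, v, hv, h1, h2⟩ a ha b hb
    obtain ⟨x, hx⟩ := hconn a ha u hu
    obtain ⟨y, hy⟩ := hconn v hv b hb
    have hx' := hx.pm hw₁
    have hy' := hy.pm hw₁
    have hp : Reach E₁ w a b (x * 1 * y) := (hx.trans h1).trans hy
    have hm : Reach E₁ w a b (x * -1 * y) := (hx.trans h2).trans hy
    rcases hx' with hx' | hx' <;> rcases hy' with hy' | hy' <;>
      subst hx' <;> subst hy' <;> norm_num at hp hm <;> exact ⟨‹_›, ‹_›⟩
  refine ⟨main, ?_⟩
  by_cases h : ∃ u ∈ V₁, ∃ v ∈ V₁, Reach E₁ w u v 1 ∧ Reach E₁ w u v (-1)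
  · exact Or.inr (main h)
  · left
    intro a ha b hb
    push_neg at h
    obtain ⟨x, hx⟩ := hconn a ha b hb
    rcases hx.pm hw₁ with hx' | hx' <;> subst hx'
    · exact Or.inr ⟨hx, fun h1 => h a ha b hb h1 hx⟩
    · exact Or.inl ⟨hx, fun h1 => h a ha b hb hx h1⟩
end
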